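/- Let 𝔤 be the Lie algebra of G, let 𝒲 be an open neighborhood of 0 in 𝔤 and 𝒱 an open neighborhood of 1 in G such that exp : 𝒲 → 𝒱 is a diffeomorphism. Let a ∈ X and let γ ∈ M_0(G) be equal to 1 on a neighborhood of a (equivalently, supp(γ) ⊆ X ∖ {a}). Then there exist an open neighborhood 𝒰 of a in X and smooth maps ξ_1, …, ξ_k : X → 𝔤 such that ξ_i(x) ∈ 𝒲 for all i and all x ∈ X, ξ_i(x) = 0 for all i and all x ∈ 𝒰, and γ(x) = exp(ξ_1(x)) exp(ξ_2(x)) ⋯ exp(ξ_k(x)) for all x ∈ X. -/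

import Mathlib

local notation "∞" => (⊤ : ℕ∞)

open scoped Manifold Topology
open Filter

noncomputable section

/-- The identity component `M₀(G)` of the group of smooth maps from a manifold `X` to a Lie
group `G`: the subgroup of smooth maps which can be joined to the constant map `1` by a
continuous path of smooth maps. -/
def smoothMapsIdComp
    {EX : Type*} [NormedAddCommGroup EX] [NormedSpace ℝ EX]
    {HX : Type*} [TopologicalSpace HX] (IX : ModelWithCorners ℝ EX HX)
    (X : Type*) [TopologicalSpace X] [ChartedSpace HX X]
    {EG : Type*} [NormedAddCommGroup EG] [NormedSpace ℝ EG]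
    {HG : Type*} [TopologicalSpace HG] (IG : ModelWithCorners ℝ EG HG)
    (G : Type*) [TopologicalSpace G] [ChartedSpace HG G] [Group G] [LieGroup IG (⊤ : ℕ∞) G] :
    Subgroup C^∞⟮IX, X; IG, G⟯ where
  carrier := { γ | ∃ Γ : X × unitInterval → G, Continuous Γ ∧
      (∀ t : unitInterval, ContMDiff IX IG (⊤ : ℕ∞) fun x => Γ (x, t)) ∧
      (∀ x, Γ (x, 0) = γ x) ∧ (∀ x, Γ (x, 1) = 1) }
  one_mem' := ⟨fun _ => 1, continuous_const, fun _ => contMDiff_const,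
    fun _ => rfl, fun _ => rfl⟩
  mul_mem' := by
    haveI : IsTopologicalGroup G := topologicalGroup_of_lieGroup (I := IG) (n := (⊤ : ℕ∞)) (G := G)
    rintro γ δ ⟨Γ, hΓc, hΓs, hΓ0, hΓ1⟩ ⟨Δ, hΔc, hΔs, hΔ0, hΔ1⟩
    refine ⟨fun p => Γ p * Δ p, hΓc.mul hΔc, fun t => (hΓs t).mul (hΔs t),
      fun x => ?_, fun x => show Γ (x, 1) * Δ (x, 1) = 1 by rw [hΓ1, hΔ1, one_mul]⟩
    show Γ (x, 0) * Δ (x, 0) = (γ * δ) x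
    rw [hΓ0, hΔ0]; rfl
  inv_mem' := by
    haveI : IsTopologicalGroup G := topologicalGroup_of_lieGroup (I := IG) (n := (⊤ : ℕ∞)) (G := G)
    rintro γ ⟨Γ, hΓc, hΓs, hΓ0, hΓ1⟩
    refine ⟨fun p => (Γ p)⁻¹, hΓc.inv, fun t => (hΓs t).inv,
      fun x => ?_, fun x => show (Γ (x, 1))⁻¹ = 1 by rw [hΓ1, inv_one]⟩
    show (Γ (x, 0))⁻¹ = γ⁻¹ x
    rw [hΓ0]; rfl


/-- Telescoping product: `∏_{j<m} f j * (f (j+1))⁻¹ = f 0 * (f m)⁻¹`. -/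
lemma prod_ofFn_telescope {G : Type*} [Group G] :
    ∀ (m : ℕ) (f : ℕ → G),
      (List.ofFn fun j : Fin m => f j * (f (j + 1))⁻¹).prod = f 0 * (f m)⁻¹ := by
  intro m
  induction m with
  | zero => intro f; simp
  | succ m ih =>
    intro f
    rw [List.ofFn_succ, List.prod_cons]
    have htail : (List.ofFn fun i : Fin m => f (i.succ : ℕ) * (f ((i.succ : ℕ) + 1))⁻¹).prod
        = f 1 * (f (m + 1))⁻¹ := by
      have := ih fun j => f (j + 1)
      simpa using this
    simp only [Fin.val_zero, Fin.val_succ] at htail ⊢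
    rw [htail]
    group


/-- **Lemma (factorization through exponentials vanishing near a point).** Let `𝒲` be an open
neighbourhood of `0` in the Lie algebra `𝔤` of `G` and `𝒱` an open neighbourhood of `1` in
`G` such that `exp : 𝒲 → 𝒱` is a diffeomorphism.  If `a ∈ X` and `γ ∈ M₀(G)` equals `1` on a
neighbourhood of `a`, then there are an open neighbourhood `𝒰` of `a` and smooth maps
`ξ_1, …, ξ_k : X → 𝔤` with values in `𝒲`, vanishing on `𝒰`, such that
`γ = exp(ξ_1) ⋯ exp(ξ_k)` pointwise. -/
theorem smoothMapsIdComp_factorization_vanishing_near_point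
    {EX : Type*} [NormedAddCommGroup EX] [NormedSpace ℝ EX]
    {HX : Type*} [TopologicalSpace HX] (IX : ModelWithCorners ℝ EX HX)
    (X : Type*) [TopologicalSpace X] [ChartedSpace HX X]
    [IsManifold IX (⊤ : ℕ∞) X] [CompactSpace X] [IX.Boundaryless]
    {EG : Type*} [NormedAddCommGroup EG] [NormedSpace ℝ EG]
    {HG : Type*} [TopologicalSpace HG] (IG : ModelWithCorners ℝ EG HG)
    (G : Type*) [TopologicalSpace G] [ChartedSpace HG G] [Group G] [LieGroup IG (⊤ : ℕ∞) G]
    [IsManifold IG (⊤ : ℕ∞) G] [CompactSpace G] [ConnectedSpace G]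
    [LieAlgebra.IsSimple ℝ (LeftInvariantDerivation IG G)]
    {𝔤 : Type*} [NormedAddCommGroup 𝔤] [NormedSpace ℝ 𝔤] [FiniteDimensional ℝ 𝔤]
    (expG : 𝔤 → G) (logG : G → 𝔤) (𝒲 : Set 𝔤) (𝒱 : Set G)
    (h𝒲open : IsOpen 𝒲) (h𝒲0 : (0 : 𝔤) ∈ 𝒲)
    (h𝒱open : IsOpen 𝒱) (h𝒱1 : (1 : G) ∈ 𝒱)
    (hexp0 : expG 0 = 1) (hbij : Set.BijOn expG 𝒲 𝒱)
    (hexp_smooth : ContMDiffOn 𝓘(ℝ, 𝔤) IG (⊤ : ℕ∞) expG 𝒲)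
    (hlog_smooth : ContMDiffOn IG 𝓘(ℝ, 𝔤) (⊤ : ℕ∞) logG 𝒱)
    (hlogexp : ∀ ξ ∈ 𝒲, logG (expG ξ) = ξ)
    (a : X) (γ : C^∞⟮IX, X; IG, G⟯) (hγ : γ ∈ smoothMapsIdComp IX X IG G)
    (hγa : ∀ᶠ x in 𝓝 a, γ x = 1) :
    ∃ 𝒰 : Set X, IsOpen 𝒰 ∧ a ∈ 𝒰 ∧
      ∃ (k : ℕ) (ξ : Fin k → X → 𝔤),
        (∀ i, ContMDiff IX 𝓘(ℝ, 𝔤) (⊤ : ℕ∞) (ξ i)) ∧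
        (∀ i x, ξ i x ∈ 𝒲) ∧
        (∀ i, ∀ x ∈ 𝒰, ξ i x = 0) ∧
        (∀ x, γ x = (List.ofFn fun i => expG (ξ i x)).prod) := by
  classical
  haveI : IsTopologicalGroup G := topologicalGroup_of_lieGroup (I := IG) (n := (⊤ : ℕ∞)) (G := G)
  -- G is T1 (hence T2): charted spaces are locally Hausdorff.
  have ht1 : ∀ g : G, IsClosed ({g} : Set G) := by
    intro g
    rw [← closure_subset_iff_isClosed]
    intro h hh
    show h ∈ ({g} : Set G)
    by_contra hne
    have hne' : h ≠ g := by simpa using hne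
    set ψ := extChartAt IG h with hψ
    have hUopen : IsOpen ψ.source := isOpen_extChartAt_source h
    have hhU : h ∈ ψ.source := mem_extChartAt_source h
    have hmem : ∀ W : Set G, IsOpen W → h ∈ W → g ∈ W := by
      intro W hWo hhW
      rcases mem_closure_iff.mp hh W hWo hhW with ⟨y, hyW, hy⟩
      rcases hy with rfl
      exact hyW
    have hgU : g ∈ ψ.source := hmem _ hUopen hhU
    have hψne : ψ h ≠ ψ g := fun e => hne' (ψ.injOn hhU hgU e)
    obtain ⟨u, v, huo, hvo, hhu, hgv, huv⟩ := t2_separation hψne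
    have hWo : IsOpen (ψ.source ∩ ψ ⁻¹' u) :=
      (continuousOn_extChartAt h).isOpen_inter_preimage hUopen huo
    have hgW : g ∈ ψ.source ∩ ψ ⁻¹' u := hmem _ hWo ⟨hhU, hhu⟩
    exact absurd rfl (huv.ne_of_mem hgW.2 hgv)
  haveI : T1Space G := ⟨ht1⟩
  haveI : T2Space G := by
    rw [t2_iff_isClosed_diagonal]
    have hdiag : Set.diagonal G = (fun p : G × G => p.1⁻¹ * p.2) ⁻¹' {1} := by
      ext p
      simp [Set.mem_diagonal_iff, inv_mul_eq_one, eq_comm]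
    rw [hdiag]
    exact isClosed_singleton.preimage (continuous_fst.inv.mul continuous_snd)
  -- basic exp/log facts
  have hlog1 : logG 1 = 0 := by rw [← hexp0]; exact hlogexp 0 h𝒲0
  have hlogmem : ∀ g ∈ 𝒱, logG g ∈ 𝒲 := by
    intro g hg
    obtain ⟨w, hw, rfl⟩ := hbij.surjOn hg
    rw [hlogexp w hw]; exact hw
  have hexplog : ∀ g ∈ 𝒱, expG (logG g) = g := by
    intro g hg
    obtain ⟨w, hw, rfl⟩ := hbij.surjOn hg
    rw [hlogexp w hw]
  -- the neighborhood N of a on which γ = 1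
  obtain ⟨N, hN, hNopen, haN⟩ := eventually_nhds_iff.mp hγa
  have hγa1 : γ a = 1 := hN a haN
  -- cutoff data on 𝔤
  obtain ⟨R, hRpos, hR⟩ := Metric.mem_nhds_iff.mp (h𝒲open.mem_nhds h𝒲0)
  obtain ⟨d, d_pos, hd⟩ :
      ∃ d : ℝ, 0 < d ∧ Euclidean.closedBall (0 : 𝔤) d ⊆ Metric.ball (0 : 𝔤) R :=
    Euclidean.nhds_basis_closedBall.mem_iff.1
      (Metric.ball_mem_nhds (0 : 𝔤) hRpos)
  set c : ContDiffBump (toEuclidean (0 : 𝔤)) :=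
    { rIn := d / 2
      rOut := d
      rIn_pos := half_pos d_pos
      rIn_lt_rOut := half_lt_self d_pos } with hc
  set ρ : 𝔤 → ℝ := fun v => c (toEuclidean v) with hρ
  have hρsupp : Function.support ρ ⊆ Euclidean.ball (0 : 𝔤) d := by
    intro y hy
    have : toEuclidean y ∈ Function.support c := by
      simpa only [Function.mem_support, hρ, Ne] using hy
    rwa [c.support_eq] at this
  have hρtsupp : tsupport ρ ⊆ Euclidean.closedBall (0 : 𝔤) d := by
    rw [tsupport, ← Euclidean.closure_ball _ d_pos.ne']
    exact closure_mono hρsupp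
  have hρcd := (c.contDiff (n := (⊤ : ℕ∞))).comp (ContinuousLinearEquiv.contDiff (𝕜 := ℝ) toEuclidean)
  have hρ01 : ∀ v, ρ v ∈ Set.Icc (0 : ℝ) 1 := fun v => ⟨c.nonneg, c.le_one⟩
  set P : Set 𝔤 := Euclidean.ball (0 : 𝔤) (d / 2) with hP
  have hPopen : IsOpen P := Euclidean.isOpen_ball
  have hP0 : (0 : 𝔤) ∈ P := Euclidean.mem_ball_self (half_pos d_pos)
  have hρP : ∀ v ∈ P, ρ v = 1 := by
    intro v hv
    exact c.one_of_mem_closedBall (Metric.ball_subset_closedBall hv)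
  set η : 𝔤 → 𝔤 := fun v => ρ v • v with hη
  have hηcd := hρcd.smul (contDiff_id (𝕜 := ℝ) (E := 𝔤))
  have hη𝒲 : ∀ v, η v ∈ 𝒲 := by
    intro v
    by_cases hv : ρ v = 0
    · simp only [hη, hv, zero_smul]; exact h𝒲0
    · have hvb : v ∈ Metric.ball (0 : 𝔤) R :=
        hd (Euclidean.ball_subset_closedBall (hρsupp (Function.mem_support.mpr hv)))
      refine hR ?_
      rw [mem_ball_zero_iff] at hvb ⊢
      calc ‖ρ v • v‖ = |ρ v| * ‖v‖ := by rw [norm_smul, Real.norm_eq_abs]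
        _ ≤ 1 * ‖v‖ := by
            have := hρ01 v
            have : |ρ v| ≤ 1 := by rw [abs_of_nonneg (hρ01 v).1]; exact (hρ01 v).2
            exact mul_le_mul_of_nonneg_right this (norm_nonneg v)
        _ = ‖v‖ := one_mul _
        _ < R := hvb
  have hηP : ∀ v ∈ P, η v = v := by
    intro v hv; simp only [hη, hρP v hv, one_smul]
  have hη0 : η 0 = 0 := by simp [hη]
  -- the compact set K and the collapse map A
  set D : Set 𝔤 := tsupport ρ with hD
  have hD𝒲 : D ⊆ 𝒲 := hρtsupp.trans (hd.trans hR)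
  have hDcpt : IsCompact D :=
    Euclidean.isCompact_closedBall.of_isClosed_subset (isClosed_tsupport ρ) hρtsupp
  set K : Set G := expG '' D with hK
  have hKcpt : IsCompact K := hDcpt.image_of_continuousOn (hexp_smooth.continuousOn.mono hD𝒲)
  have hKcl : IsClosed K := hKcpt.isClosed
  have hK𝒱 : K ⊆ 𝒱 := by
    rintro _ ⟨v, hv, rfl⟩; exact hbij.mapsTo (hD𝒲 hv)
  set A : G → G := fun g => if g ∈ 𝒱 then expG (η (logG g)) else 1 with hA
  have hA_on_V : ∀ g ∈ 𝒱, A g = expG (η (logG g)) := fun g hg => if_pos hg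
  have hAval : ∀ g, A g ∈ 𝒱 := by
    intro g
    by_cases hg : g ∈ 𝒱
    · rw [hA_on_V g hg]; exact hbij.mapsTo (hη𝒲 _)
    · have h1 : A g = 1 := if_neg hg
      rw [h1]; exact h𝒱1
  have hA_off_K : ∀ g ∉ K, A g = 1 := by
    intro g hg
    by_cases h : g ∈ 𝒱
    · rw [hA_on_V g h]
      have hz : ρ (logG g) = 0 := by
        by_contra hnz
        exact hg ⟨logG g, subset_tsupport ρ (Function.mem_support.mpr hnz), hexplog g h⟩
      rw [show η (logG g) = 0 by simp [hη, hz], hexp0]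
    · exact if_neg h
  have hAid : ∀ g, g ∈ 𝒱 → logG g ∈ P → A g = g := by
    intro g hg hlg
    rw [hA_on_V g hg, hηP _ hlg, hexplog g hg]
  have hA1 : A 1 = 1 := by
    rw [hA_on_V 1 h𝒱1, hlog1, hη0, hexp0]
  have hAsmooth : ContMDiff IG IG (⊤ : ℕ∞) A := by
    intro g₀
    by_cases hg₀ : g₀ ∈ 𝒱
    · have h1 : ContMDiffAt IG 𝓘(ℝ, 𝔤) (⊤ : ℕ∞) logG g₀ :=
        hlog_smooth.contMDiffAt (h𝒱open.mem_nhds hg₀)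
      have h2 : ContMDiffAt 𝓘(ℝ, 𝔤) 𝓘(ℝ, 𝔤) (⊤ : ℕ∞) η (logG g₀) :=
        (contMDiff_iff_contDiff.mpr hηcd) (logG g₀)
      have h3 : ContMDiffAt 𝓘(ℝ, 𝔤) IG (⊤ : ℕ∞) expG (η (logG g₀)) :=
        hexp_smooth.contMDiffAt (h𝒲open.mem_nhds (hη𝒲 _))
      refine ((h3.comp g₀ (h2.comp g₀ h1)).congr_of_eventuallyEq ?_)
      filter_upwards [h𝒱open.mem_nhds hg₀] with g hg
      simpa [Function.comp] using hA_on_V g hg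
    · have hg₀K : g₀ ∈ Kᶜ := fun hKm => hg₀ (hK𝒱 hKm)
      refine (contMDiffAt_const (c := (1 : G))).congr_of_eventuallyEq ?_
      filter_upwards [hKcl.isOpen_compl.mem_nhds hg₀K] with g hg
      exact hA_off_K g hg
  -- the homotopy
  obtain ⟨Γ, hΓc, hΓs, hΓ0, hΓ1⟩ :
      ∃ Γ : X × unitInterval → G, Continuous Γ ∧
        (∀ t : unitInterval, ContMDiff IX IG (⊤ : ℕ∞) fun x => Γ (x, t)) ∧
        (∀ x, Γ (x, 0) = γ x) ∧ (∀ x, Γ (x, 1) = 1) := hγ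
  set Γ' : X × unitInterval → G := fun p => Γ p * (Γ (a, p.2))⁻¹ with hΓ'
  have hΓ'c : Continuous Γ' :=
    hΓc.mul ((hΓc.comp (continuous_const.prodMk continuous_snd)).inv)
  have hΓ's : ∀ t, ContMDiff IX IG (⊤ : ℕ∞) fun x => Γ' (x, t) := by
    intro t
    show ContMDiff IX IG (⊤ : ℕ∞) fun x => Γ (x, t) * (Γ (a, t))⁻¹
    exact (hΓs t).mul contMDiff_const
  have hΓ'a : ∀ t, Γ' (a, t) = 1 := fun t => mul_inv_cancel _
  have hΓ'0 : ∀ x, Γ' (x, 0) = γ x := by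
    intro x
    show Γ (x, 0) * (Γ (a, 0))⁻¹ = γ x
    rw [hΓ0, hΓ0, hγa1, inv_one, mul_one]
  have hΓ'1 : ∀ x, Γ' (x, 1) = 1 := by
    intro x
    show Γ (x, 1) * (Γ (a, 1))⁻¹ = 1
    rw [hΓ1, hΓ1, inv_one, mul_one]
  -- the tube neighborhood O of a
  set V₁ : Set G := 𝒱 ∩ logG ⁻¹' P with hV₁
  have hV₁open : IsOpen V₁ :=
    hlog_smooth.continuousOn.isOpen_inter_preimage h𝒱open hPopen
  have h1V₁ : (1 : G) ∈ V₁ := ⟨h𝒱1, by rw [Set.mem_preimage, hlog1]; exact hP0⟩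
  have hsub : ({a} ×ˢ (Set.univ : Set unitInterval)) ⊆ Γ' ⁻¹' V₁ := by
    rintro ⟨x, t⟩ ⟨hx, -⟩
    rcases hx with rfl
    show Γ' (x, t) ∈ V₁
    rw [hΓ'a t]; exact h1V₁
  obtain ⟨O, v, hOopen, -, haO', hunv, hOv⟩ :=
    generalized_tube_lemma isCompact_singleton isCompact_univ
      (hV₁open.preimage hΓ'c) hsub
  have haO : a ∈ O := haO' rfl
  have hO : ∀ x ∈ O, ∀ t, Γ' (x, t) ∈ V₁ := by
    intro x hx t
    exact hOv (Set.mk_mem_prod hx (hunv trivial))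
  -- the corrected homotopy B
  set B : X × unitInterval → G := fun p => (A (Γ' p))⁻¹ * Γ' p with hB
  have hBc : Continuous B := ((hAsmooth.continuous.comp hΓ'c).inv).mul hΓ'c
  have hBs : ∀ t, ContMDiff IX IG (⊤ : ℕ∞) fun x => B (x, t) :=
    fun t => ((hAsmooth.comp (hΓ's t)).inv).mul (hΓ's t)
  have hBO : ∀ x ∈ O, ∀ t, B (x, t) = 1 := by
    intro x hx t
    have h := hO x hx t
    show (A (Γ' (x, t)))⁻¹ * Γ' (x, t) = 1
    rw [hAid _ h.1 h.2, inv_mul_cancel]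
  have hB1 : ∀ x, B (x, 1) = 1 := by
    intro x
    show (A (Γ' (x, 1)))⁻¹ * Γ' (x, 1) = 1
    rw [hΓ'1, hA1, inv_one, mul_one]
  have hB0 : ∀ x, B (x, 0) = (A (γ x))⁻¹ * γ x := by
    intro x
    show (A (Γ' (x, 0)))⁻¹ * Γ' (x, 0) = _
    rw [hΓ'0]
  -- Lebesgue number argument
  have key : ∃ δ : ℝ, 0 < δ ∧ ∀ (x : X) (t t' : unitInterval),
      dist t t' < δ → B (x, t) * (B (x, t'))⁻¹ ∈ 𝒱 := by
    set Φ : X × unitInterval × unitInterval → G :=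
      fun q => B (q.1, q.2.1) * (B (q.1, q.2.2))⁻¹ with hΦ
    have hΦc : Continuous Φ := by
      refine Continuous.mul ?_ (Continuous.inv ?_)
      · exact hBc.comp (continuous_fst.prodMk (continuous_fst.comp continuous_snd))
      · exact hBc.comp (continuous_fst.prodMk (continuous_snd.comp continuous_snd))
    set Cl : Set (X × unitInterval × unitInterval) := Φ ⁻¹' 𝒱ᶜ with hCldef
    have hClc : IsClosed Cl := (h𝒱open.isClosed_compl).preimage hΦc
    have hdiag : ∀ q : X × unitInterval × unitInterval, q.2.1 = q.2.2 → Φ q ∈ 𝒱 := by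
      intro q hq
      have : Φ q = 1 := by rw [hΦ]; simp only; rw [hq, mul_inv_cancel]
      rw [this]; exact h𝒱1
    rcases Cl.eq_empty_or_nonempty with hCl | hCl
    · refine ⟨1, one_pos, fun x t t' _ => ?_⟩
      by_contra hmem
      have : (x, t, t') ∈ Cl := hmem
      rw [hCl] at this
      exact this
    · obtain ⟨q₀, hq₀Cl, hmin⟩ := hClc.isCompact.exists_isMinOn hCl
        ((continuous_fst.comp continuous_snd).dist
          (continuous_snd.comp continuous_snd)).continuousOn
      have hq₀pos : 0 < dist q₀.2.1 q₀.2.2 := by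
        rw [dist_pos]
        intro he
        exact hq₀Cl (hdiag q₀ he)
      refine ⟨dist q₀.2.1 q₀.2.2, hq₀pos, fun x t t' hdlt => ?_⟩
      by_contra hmem
      have hin : (x, t, t') ∈ Cl := hmem
      have := isMinOn_iff.mp hmin _ hin
      exact absurd (lt_of_lt_of_le hdlt (le_of_eq rfl)) (not_lt.mpr this)
  obtain ⟨δ, hδpos, hδ⟩ := key
  obtain ⟨n₀, hn₀⟩ := exists_nat_one_div_lt hδpos
  set m : ℕ := n₀ + 1 with hmdef
  have hm0 : (0 : ℝ) < (m : ℝ) := by positivity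
  have hm : (1 : ℝ) / (m : ℝ) < δ := by exact_mod_cast hn₀
  -- the subdivision times
  set s : ℕ → unitInterval := fun j =>
    ⟨((min j m : ℕ) : ℝ) / (m : ℝ), by positivity, by
      rw [div_le_one hm0]
      exact_mod_cast min_le_right j m⟩ with hs
  have hs0 : s 0 = 0 := by
    apply Subtype.ext
    simp [hs]
  have hsm : s m = 1 := by
    apply Subtype.ext
    simp [hs, div_self hm0.ne']
  have hdist : ∀ j, j < m → dist (s j) (s (j + 1)) = 1 / (m : ℝ) := by
    intro j hj
    rw [Subtype.dist_eq]
    show dist (((min j m : ℕ) : ℝ) / (m : ℝ)) (((min (j + 1) m : ℕ) : ℝ) / (m : ℝ)) = _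
    rw [min_eq_left hj.le, min_eq_left (Nat.succ_le_of_lt hj), Real.dist_eq]
    have : ((j : ℕ) : ℝ) / (m : ℝ) - (((j + 1 : ℕ) : ℝ)) / (m : ℝ) = -(1 / (m : ℝ)) := by
      push_cast
      field_simp
      ring
    rw [this, abs_neg, abs_of_nonneg (by positivity)]
  have hBr : ∀ (x : X) (j : ℕ), j < m → B (x, s j) * (B (x, s (j + 1)))⁻¹ ∈ 𝒱 := by
    intro x j hj
    exact hδ x (s j) (s (j + 1)) (by rw [hdist j hj]; exact hm)
  -- the chain F and the maps ξ
  set F : ℕ → X → G := fun j x => if j = 0 then γ x else B (x, s (j - 1)) with hF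
  have hF0 : ∀ x, F 0 x = γ x := fun x => rfl
  have hFsucc : ∀ j x, F (j + 1) x = B (x, s j) := by
    intro j x
    simp [hF]
  have hrat0 : ∀ x, F 0 x * (F 1 x)⁻¹ = A (γ x) := by
    intro x
    rw [hF0, hFsucc 0 x, hs0, hB0]
    group
  have hrat𝒱 : ∀ (x : X) (i : ℕ), i ≤ m → F i x * (F (i + 1) x)⁻¹ ∈ 𝒱 := by
    intro x i hi
    cases i with
    | zero => rw [hrat0]; exact hAval _
    | succ j =>
      rw [hFsucc j x, hFsucc (j + 1) x]
      exact hBr x j (Nat.lt_of_succ_le hi)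
  have hrat1 : ∀ x ∈ N ∩ O, ∀ i : ℕ, F i x * (F (i + 1) x)⁻¹ = 1 := by
    rintro x ⟨hxN, hxO⟩ i
    have hFone : ∀ i : ℕ, F i x = 1 := by
      intro i
      cases i with
      | zero => rw [hF0]; exact hN x hxN
      | succ j => rw [hFsucc j x]; exact hBO x hxO _
    rw [hFone, hFone, inv_one, mul_one]
  have hrat_smooth : ∀ i : ℕ, ContMDiff IX IG (⊤ : ℕ∞) fun x => F i x * (F (i + 1) x)⁻¹ := by
    intro i
    cases i with
    | zero =>
      have : (fun x => F 0 x * (F 1 x)⁻¹) = fun x => γ x * (B (x, s 0))⁻¹ := by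
        funext x; rw [hF0, hFsucc 0 x]
      rw [this]
      exact γ.contMDiff.mul (hBs (s 0)).inv
    | succ j =>
      have : (fun x => F (j + 1) x * (F (j + 2) x)⁻¹)
          = fun x => B (x, s j) * (B (x, s (j + 1)))⁻¹ := by
        funext x; rw [hFsucc j x, hFsucc (j + 1) x]
      rw [this]
      exact (hBs (s j)).mul (hBs (s (j + 1))).inv
  -- assemble
  refine ⟨N ∩ O, hNopen.inter hOopen, ⟨haN, haO⟩, m + 1,
    fun i x => logG (F (i : ℕ) x * (F ((i : ℕ) + 1) x)⁻¹), ?_, ?_, ?_, ?_⟩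
  · intro i
    exact hlog_smooth.comp_contMDiff (hrat_smooth i)
      fun x => hrat𝒱 x i (Nat.lt_succ_iff.mp i.isLt)
  · intro i x
    exact hlogmem _ (hrat𝒱 x i (Nat.lt_succ_iff.mp i.isLt))
  · intro i x hx
    show logG (F (i : ℕ) x * (F ((i : ℕ) + 1) x)⁻¹) = 0
    rw [hrat1 x hx i, hlog1]
  · intro x
    have hentry : (fun i : Fin (m + 1) =>
        expG (logG (F (i : ℕ) x * (F ((i : ℕ) + 1) x)⁻¹)))
        = fun i : Fin (m + 1) => F (i : ℕ) x * (F ((i : ℕ) + 1) x)⁻¹ := by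
      funext i
      exact hexplog _ (hrat𝒱 x i (Nat.lt_succ_iff.mp i.isLt))
    rw [hentry, prod_ofFn_telescope (m + 1) fun j => F j x]
    rw [hF0, hFsucc m x, hsm, hB1, inv_one, mul_one]
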